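/- Let Z ∈ ℚ[p_1, p_2, ...][[t]] and r ≥ 1 an integer. Assume: (i) the coefficient of t^n in Z is a homogeneous polynomial of degree n in the p_i's (where p_i has degree i); (ii) ∂Z/∂t = Σ_{m=1}^{r} t^{m−1} M^{(m)} Z for differential operators M^{(m)} independent of t; (iii) each M^{(m)} can be written as Σ_{i≥1} p_i M_i^{(m)} such that the operators L_i := i∂/∂p_i − Σ_{m=1}^r t^m M_i^{(m)} satisfy: (a) [t^n] L_i F is homogeneous of degree n−i whenever [t^n]F is homogeneous of degree n, and (b) there exist operators D_{ij}^k (polynomial in t) with [L_i, L_j] = t·Σ_{k≥1} D_{ij}^k L_k. Then L_i Z = 0 for all i ≥ 1. -/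

import Mathlib

open MvPolynomial

/-- `p_i^* = i·∂/∂p_i` on `ℚ[p_1, p_2, ...]` (with `X n = p_n`), zero for `i ≤ 0`. -/
noncomputable def pstar (i : ℤ) : MvPolynomial ℕ ℚ → MvPolynomial ℕ ℚ :=
  if 0 < i then fun P => (i : ℚ) • pderiv i.toNat P else 0

lemma pstar_nat (k : ℕ) (hk : 1 ≤ k) (P : MvPolynomial ℕ ℚ) :
    pstar (k : ℤ) P = (k : ℚ) • pderiv k P := by
  unfold pstar
  rw [if_pos (by exact_mod_cast hk : (0:ℤ) < (k:ℤ))]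
  simp

lemma pstar_zero (i : ℤ) : pstar i 0 = 0 := by
  unfold pstar; split <;> simp

lemma pstar_sum (i : ℕ) (hi : 1 ≤ i) {α : Type*} (s : Finset α)
    (f : α → MvPolynomial ℕ ℚ) :
    pstar (i : ℤ) (∑ k ∈ s, f k) = ∑ k ∈ s, pstar (i : ℤ) (f k) := by
  simp only [pstar_nat i hi, map_sum, Finset.smul_sum]

lemma mem_support_le {u : ℕ →₀ ℕ} {d : ℤ}
    (h : Finsupp.weight (fun i : ℕ => (i : ℤ)) u = d) {k : ℕ} (hk : k ∈ u.support) :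
    (k : ℤ) ≤ d := by
  rw [Finsupp.weight_apply, Finsupp.sum] at h
  have h1 : ∀ j ∈ u.support, (0:ℤ) ≤ u j • (j : ℤ) := by
    intro j _; rw [nsmul_eq_mul]; positivity
  have h2 : u k • (k : ℤ) ≤ ∑ j ∈ u.support, u j • (j : ℤ) :=
    Finset.single_le_sum h1 hk
  have h3 : 1 ≤ u k := Nat.one_le_iff_ne_zero.mpr (Finsupp.mem_support_iff.mp hk)
  have h4 : (k : ℤ) ≤ u k • (k : ℤ) := by
    rw [nsmul_eq_mul]
    nlinarith [Int.ofNat_le.mpr h3, Int.ofNat_nonneg k]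
  omega

lemma homog_zero {P : MvPolynomial ℕ ℚ} {d : ℤ}
    (h : IsWeightedHomogeneous (fun i : ℕ => (i : ℤ)) P d) (hd : d < 0) : P = 0 := by
  ext u
  rw [coeff_zero]
  by_contra hc
  have h2 := h hc
  have h3 : (0:ℤ) ≤ Finsupp.weight (fun i : ℕ => (i : ℤ)) u := by
    rw [Finsupp.weight_apply, Finsupp.sum]
    refine Finset.sum_nonneg fun j _ => ?_
    rw [nsmul_eq_mul]; positivity
  omega

lemma X_mul_pderiv_monomial (k : ℕ) (u : ℕ →₀ ℕ) (c : ℚ) :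
    X k * pderiv k (monomial u c) = ((u k : ℕ) : ℚ) • monomial u c := by
  rw [pderiv_monomial]
  by_cases h : u k = 0
  · simp [h]
  · have huu : Finsupp.single k 1 + (u - Finsupp.single k 1) = u := by
      ext j
      by_cases hj : j = k
      · subst hj
        simp only [Finsupp.add_apply, Finsupp.single_eq_same, Finsupp.tsub_apply]
        omega
      · simp [Finsupp.single_eq_of_ne' (Ne.symm hj), Finsupp.tsub_apply]
    rw [X, monomial_mul, one_mul, smul_monomial, huu, smul_eq_mul]
    congr 1
    ring

lemma euler {P : MvPolynomial ℕ ℚ} {d : ℤ}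
    (h : IsWeightedHomogeneous (fun i : ℕ => (i : ℤ)) P d) {N : ℕ} (hN : d < (N : ℤ)) :
    ∑ k ∈ Finset.range N, X k * ((k : ℚ) • pderiv k P) = (d : ℚ) • P := by
  have step : ∀ k : ℕ, X k * ((k : ℚ) • pderiv k P)
      = ∑ u ∈ P.support, ((k * u k : ℕ) : ℚ) • monomial u (coeff u P) := by
    intro k
    conv_lhs => rw [P.as_sum]
    rw [map_sum, Finset.smul_sum, Finset.mul_sum]
    refine Finset.sum_congr rfl fun u _ => ?_
    rw [mul_smul_comm, X_mul_pderiv_monomial, smul_smul]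
    congr 1
    push_cast; ring
  rw [Finset.sum_congr rfl fun k _ => step k, Finset.sum_comm]
  conv_rhs => rw [P.as_sum, Finset.smul_sum]
  refine Finset.sum_congr rfl fun u hu => ?_
  rw [← Finset.sum_smul]
  congr 1
  have hw := h (mem_support_iff.mp hu)
  have hsub : u.support ⊆ Finset.range N := by
    intro k hk
    have := mem_support_le hw hk
    rw [Finset.mem_range]
    omega
  have h1 : ((∑ k ∈ Finset.range N, k * u k : ℕ) : ℤ) = d := by
    rw [← Finset.sum_subset hsub (fun k _ hk => by
      rw [Finsupp.notMem_support_iff.mp hk, mul_zero])]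
    rw [Finsupp.weight_apply, Finsupp.sum] at hw
    rw [← hw]
    push_cast
    refine Finset.sum_congr rfl fun j _ => ?_
    rw [nsmul_eq_mul]
    ring
  have h2 : ((∑ k ∈ Finset.range N, k * u k : ℕ) : ℚ) = (d : ℚ) := by
    exact_mod_cast congrArg (fun z : ℤ => (z : ℚ)) h1
  rw [← h2]
  push_cast
  rfl

lemma pstar_X_mul (i k : ℕ) (hi : 1 ≤ i) (Q : MvPolynomial ℕ ℚ) :
    X k * pstar (i : ℤ) Q
      = pstar (i : ℤ) (X k * Q) - (if k = i then (i : ℚ) • Q else 0) := by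
  rw [pstar_nat i hi, pstar_nat i hi, pderiv_mul, smul_add]
  by_cases h : k = i
  · subst h
    rw [if_pos rfl, pderiv_X_self, one_mul, mul_smul_comm]
    abel
  · rw [if_neg h, pderiv_X_of_ne h, zero_mul, smul_zero, zero_add, sub_zero,
      mul_smul_comm]

/-- The constraint-extraction lemma. A series `Z ∈ ℚ[p₁,p₂,…][[t]]` is identified with its
family of coefficients `Z n = [tⁿ]Z`; the variable `p_i` has (weighted) degree `i`. Assume:
(i) `[tⁿ]Z` is homogeneous of degree `n`;
(ii) the evolution equation `∂Z/∂t = Σ_{m=1}^{r} t^{m−1} M⁽ᵐ⁾ Z` holds, i.e. coefficientwise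
`(n+1)·Z_{n+1} = Σ_{m=1}^{min(r,n+1)} M⁽ᵐ⁾ Z_{n+1−m}`;
(iii) `M⁽ᵐ⁾ = Σ_{i≥1} p_i M_i⁽ᵐ⁾` (pointwise, locally finite), and the candidate constraints
`L_i = i∂/∂p_i − Σ_{m=1}^r tᵐ M_i⁽ᵐ⁾` (acting coefficientwise on series via `Lapp`) satisfy
(a) `[tⁿ]L_iF` is homogeneous of degree `n−i` whenever every `[tⁿ]F` is homogeneous of
degree `n`, and (b) `[L_i, L_j] = t·Σ_{k≥1} D_{ij}^k L_k` for some operators `D_{ij}^k`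
polynomial in `t` (given by their `t`-coefficients `D i j k m`).
Then `L_i Z = 0` for all `i ≥ 1`. -/
theorem constraint_extraction (r : ℕ) (hr : 1 ≤ r)
    (Z : ℕ → MvPolynomial ℕ ℚ)
    (hhom : ∀ n : ℕ,
        MvPolynomial.IsWeightedHomogeneous (fun i : ℕ => (i : ℤ)) (Z n) (n : ℤ))
    (Mev : ℕ → MvPolynomial ℕ ℚ →ₗ[ℚ] MvPolynomial ℕ ℚ)
    (hev : ∀ n : ℕ, ((n : ℚ) + 1) • Z (n + 1)
        = ∑ m ∈ Finset.Icc 1 r, if m ≤ n + 1 then Mev m (Z (n + 1 - m)) else 0)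
    (Mi : ℕ → ℕ → MvPolynomial ℕ ℚ →ₗ[ℚ] MvPolynomial ℕ ℚ)
    (hM : ∀ m ∈ Finset.Icc 1 r, ∀ P,
        Mev m P = ∑ᶠ i : ℕ, if 1 ≤ i then X i * Mi m i P else 0)
    (Lapp : ℕ → (ℕ → MvPolynomial ℕ ℚ) → (ℕ → MvPolynomial ℕ ℚ))
    (hLapp : ∀ (i : ℕ) (F : ℕ → MvPolynomial ℕ ℚ) (n : ℕ), Lapp i F n
        = pstar (i : ℤ) (F n)
          - ∑ m ∈ Finset.Icc 1 r, if m ≤ n then Mi m i (F (n - m)) else 0)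
    (hhomL : ∀ (F : ℕ → MvPolynomial ℕ ℚ),
        (∀ n : ℕ, MvPolynomial.IsWeightedHomogeneous (fun i : ℕ => (i : ℤ)) (F n) (n : ℤ)) →
        ∀ i : ℕ, 1 ≤ i → ∀ n : ℕ,
          MvPolynomial.IsWeightedHomogeneous (fun i : ℕ => (i : ℤ)) (Lapp i F n)
            ((n : ℤ) - i))
    (D : ℕ → ℕ → ℕ → ℕ → MvPolynomial ℕ ℚ →ₗ[ℚ] MvPolynomial ℕ ℚ)
    (hDpoly : ∀ i j l : ℕ, ∃ N : ℕ, ∀ m : ℕ, N ≤ m → D i j l m = 0)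
    (hcomm : ∀ i j : ℕ, 1 ≤ i → 1 ≤ j → ∀ (F : ℕ → MvPolynomial ℕ ℚ) (n : ℕ),
        Lapp i (Lapp j F) n - Lapp j (Lapp i F) n
          = ∑ᶠ l : ℕ, if 1 ≤ l then
              ∑ m ∈ Finset.range n, D i j l m (Lapp l F (n - 1 - m)) else 0) :
    ∀ i : ℕ, 1 ≤ i → ∀ n : ℕ, Lapp i Z n = 0 := by
  intro i0 hi0 n0
  induction n0 using Nat.strong_induction_on generalizing i0 with
  | _ n IH =>
  by_cases hni : n < i0
  · exact homog_zero (hhomL Z hhom i0 hi0 n) (by push_cast; omega)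
  push_neg at hni
  have hn1 : 1 ≤ n := le_trans hi0 hni
  set N := n + r + 1 with hNdef
  -- key pointwise identity
  have key : ∀ j : ℕ, 1 ≤ j → pstar (j : ℤ) (Lapp i0 Z n) = pstar (i0 : ℤ) (Lapp j Z n) := by
    intro j hj
    have e1 : ∀ a b : ℕ, 1 ≤ a → 1 ≤ b → Lapp a (Lapp b Z) n = pstar (a : ℤ) (Lapp b Z n) := by
      intro a b ha hb
      rw [hLapp, sub_eq_self]
      refine Finset.sum_eq_zero fun m hm => ?_
      have hm1 : 1 ≤ m := (Finset.mem_Icc.mp hm).1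
      by_cases h2 : m ≤ n
      · rw [if_pos h2, IH (n - m) (by omega) b hb, map_zero]
      · rw [if_neg h2]
    have h3 := hcomm j i0 hj hi0 Z n
    rw [e1 j i0 hj hi0, e1 i0 j hi0 hj] at h3
    have hz : (∑ᶠ l : ℕ, if 1 ≤ l then
        ∑ m ∈ Finset.range n, D j i0 l m (Lapp l Z (n - 1 - m)) else 0) = 0 := by
      apply finsum_eq_zero_of_forall_eq_zero
      intro l
      by_cases hl : 1 ≤ l
      · rw [if_pos hl]
        refine Finset.sum_eq_zero fun m _ => ?_
        rw [IH (n - 1 - m) (by omega) l hl, map_zero]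
      · rw [if_neg hl]
    rw [hz, sub_eq_zero] at h3
    exact h3
  -- vanishing of Mi on homogeneous polys of low degree
  have hMiz : ∀ m ∈ Finset.Icc 1 r, ∀ (P : MvPolynomial ℕ ℚ) (e : ℕ),
      IsWeightedHomogeneous (fun i : ℕ => (i : ℤ)) P (e : ℤ) →
      ∀ k, e + m < k → Mi m k P = 0 := by
    intro m hm P e hP k hk
    obtain ⟨hm1, hmr⟩ := Finset.mem_Icc.mp hm
    have hk1 : 1 ≤ k := by omega
    set F : ℕ → MvPolynomial ℕ ℚ := fun n' => if n' = e then P else 0 with hF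
    have hFhom : ∀ n', IsWeightedHomogeneous (fun i : ℕ => (i : ℤ)) (F n') (n' : ℤ) := by
      intro n'
      by_cases h : n' = e
      · subst h; simpa [F] using hP
      · simp only [F, if_neg h]; exact isWeightedHomogeneous_zero _ _ _
    have h1 := hhomL F hFhom k hk1 (e + m)
    have h2 := hLapp k F (e + m)
    have hF1 : F (e + m) = 0 := by
      simp only [F, if_neg (by omega : ¬ e + m = e)]
    have hsum : (∑ m' ∈ Finset.Icc 1 r,
        if m' ≤ e + m then Mi m' k (F (e + m - m')) else 0) = Mi m k P := by
      rw [Finset.sum_eq_single m]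
      · rw [if_pos (by omega), show e + m - m = e from by omega]
        congr 1
        simp [F]
      · intro m' hm' hne
        by_cases hle : m' ≤ e + m
        · rw [if_pos hle, show F (e + m - m') = 0 from by
            simp only [F, if_neg (by omega : ¬ e + m - m' = e)], map_zero]
        · rw [if_neg hle]
      · intro h; exact absurd hm h
    rw [h2, hF1, pstar_zero, hsum, zero_sub] at h1
    have h4 := homog_zero h1 (by push_cast; omega)
    exact neg_eq_zero.mp h4
  -- guarded Euler identity
  have euler_guard : ∀ (Q : MvPolynomial ℕ ℚ) (d : ℤ),
      IsWeightedHomogeneous (fun i : ℕ => (i : ℤ)) Q d → d < (N : ℤ) →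
      (∑ k ∈ Finset.range N, if 1 ≤ k then X k * pstar (k : ℤ) Q else 0) = (d : ℚ) • Q := by
    intro Q d hQ hdN
    rw [← euler hQ hdN]
    refine Finset.sum_congr rfl fun k _ => ?_
    by_cases h1 : 1 ≤ k
    · rw [if_pos h1, pstar_nat k h1]
    · have hk0 : k = 0 := by omega
      subst hk0
      simp
  -- evolution at level n
  have hev' : (n : ℚ) • Z n
      = ∑ m ∈ Finset.Icc 1 r, if m ≤ n then Mev m (Z (n - m)) else 0 := by
    have h := hev (n - 1)
    rw [Nat.sub_add_cancel hn1] at h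
    rw [← h]
    congr 1
    rw [Nat.cast_sub hn1]
    push_cast
    ring
  -- identification of Mev with a finite sum
  have hMevN : ∀ m ∈ Finset.Icc 1 r, m ≤ n →
      Mev m (Z (n - m)) = ∑ k ∈ Finset.range N,
        (if 1 ≤ k then X k * Mi m k (Z (n - m)) else 0) := by
    intro m hm hmn
    rw [hM m hm]
    apply finsum_eq_sum_of_support_subset
    intro k hk
    simp only [Function.mem_support] at hk
    simp only [Finset.coe_range, Set.mem_Iio]
    by_contra hkN
    push_neg at hkN
    apply hk
    have h1k : 1 ≤ k := by omega
    rw [if_pos h1k, hMiz m hm (Z (n - m)) (n - m) (hhom (n - m)) k (by omega), mul_zero]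
  -- the relation Σ p_k (L_k Z)_n = 0
  have star : (∑ k ∈ Finset.range N, if 1 ≤ k then X k * Lapp k Z n else 0) = 0 := by
    have expand : ∀ k ∈ Finset.range N, (if 1 ≤ k then X k * Lapp k Z n else 0)
        = (if 1 ≤ k then X k * pstar (k : ℤ) (Z n) else 0)
          - ∑ m ∈ Finset.Icc 1 r,
              (if m ≤ n then (if 1 ≤ k then X k * Mi m k (Z (n - m)) else 0) else 0) := by
      intro k _
      by_cases h1 : 1 ≤ k
      · simp only [if_pos h1, hLapp k Z n, mul_sub, Finset.mul_sum]
        congr 1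
        refine Finset.sum_congr rfl fun m _ => ?_
        by_cases h2 : m ≤ n <;> simp [h2]
      · simp [h1]
    rw [Finset.sum_congr rfl expand, Finset.sum_sub_distrib,
      euler_guard (Z n) (n : ℤ) (hhom n) (by push_cast; omega), Finset.sum_comm]
    have hinner : ∀ m ∈ Finset.Icc 1 r,
        (∑ k ∈ Finset.range N,
          if m ≤ n then (if 1 ≤ k then X k * Mi m k (Z (n - m)) else 0) else 0)
        = (if m ≤ n then Mev m (Z (n - m)) else 0) := by
      intro m hm
      by_cases h2 : m ≤ n
      · simp only [if_pos h2]
        exact (hMevN m hm h2).symm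
      · simp [h2]
    rw [Finset.sum_congr rfl hinner, ← hev', Int.cast_natCast, sub_self]
  -- main chain
  have hLin := hhomL Z hhom i0 hi0 n
  have c1 : (((n : ℤ) - (i0 : ℤ) : ℤ) : ℚ) • Lapp i0 Z n
      = ∑ k ∈ Finset.range N, (if 1 ≤ k then X k * pstar (k : ℤ) (Lapp i0 Z n) else 0) :=
    (euler_guard _ _ hLin (by push_cast; omega)).symm
  have c2 : (∑ k ∈ Finset.range N, (if 1 ≤ k then X k * pstar (k : ℤ) (Lapp i0 Z n) else 0))
      = ∑ k ∈ Finset.range N, (if 1 ≤ k then X k * pstar (i0 : ℤ) (Lapp k Z n) else 0) := by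
    refine Finset.sum_congr rfl fun k _ => ?_
    by_cases h1 : 1 ≤ k
    · rw [if_pos h1, if_pos h1, key k h1]
    · rw [if_neg h1, if_neg h1]
  have c3 : (∑ k ∈ Finset.range N, (if 1 ≤ k then X k * pstar (i0 : ℤ) (Lapp k Z n) else 0))
      = (∑ k ∈ Finset.range N, pstar (i0 : ℤ) (if 1 ≤ k then X k * Lapp k Z n else 0))
        - (i0 : ℚ) • Lapp i0 Z n := by
    have hterm : ∀ k ∈ Finset.range N, (if 1 ≤ k then X k * pstar (i0 : ℤ) (Lapp k Z n) else 0)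
        = pstar (i0 : ℤ) (if 1 ≤ k then X k * Lapp k Z n else 0)
          - (if k = i0 then (i0 : ℚ) • Lapp k Z n else 0) := by
      intro k _
      by_cases h1 : 1 ≤ k
      · rw [if_pos h1, if_pos h1, pstar_X_mul i0 k hi0]
      · have hk0 : k = 0 := by omega
        subst hk0
        rw [if_neg h1, if_neg h1, pstar_zero, if_neg (by omega : ¬ (0:ℕ) = i0), sub_zero]
    rw [Finset.sum_congr rfl hterm, Finset.sum_sub_distrib]
    congr 1
    rw [Finset.sum_ite_eq' (Finset.range N) i0 (fun k => (i0 : ℚ) • Lapp k Z n),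
      if_pos (Finset.mem_range.mpr (by omega))]
  have c4 : (∑ k ∈ Finset.range N, pstar (i0 : ℤ) (if 1 ≤ k then X k * Lapp k Z n else 0))
      = pstar (i0 : ℤ) (∑ k ∈ Finset.range N, if 1 ≤ k then X k * Lapp k Z n else 0) :=
    (pstar_sum i0 hi0 _ _).symm
  have final : (((n : ℤ) - (i0 : ℤ) : ℤ) : ℚ) • Lapp i0 Z n
      = - ((i0 : ℚ) • Lapp i0 Z n) := by
    rw [c1, c2, c3, c4, star, pstar_zero, zero_sub]
  have hsmul : (n : ℚ) • Lapp i0 Z n = 0 := by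
    have h5 : (((n : ℤ) - (i0 : ℤ) : ℤ) : ℚ) • Lapp i0 Z n + (i0 : ℚ) • Lapp i0 Z n = 0 := by
      rw [final]; abel
    rw [← add_smul] at h5
    rw [← h5]
    congr 1
    push_cast
    ring
  have hne : (n : ℚ) ≠ 0 := by
    have : (0:ℚ) < (n:ℚ) := by exact_mod_cast hn1
    exact ne_of_gt this
  calc Lapp i0 Z n = (n:ℚ)⁻¹ • ((n:ℚ) • Lapp i0 Z n) := by
        rw [smul_smul, inv_mul_cancel₀ hne, one_smul]
    _ = 0 := by rw [hsmul, smul_zero]
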